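/- arXiv:2605.25604 — 4 statements merged into one kernel-verified Lean document; each statement's English description precedes it below -/
import Mathlib

section
/- With the setup of reward components r_k having σ_k > 0, convex weights w_k, combined reward r_sum = ∑_k w_k r_k with σ_sum > 0, DVAO advantage A_DVAO(j) = (∑_k w_k σ_k A_k(j)) / (∑_l w_l σ_l) and reward-combination advantage A_sum(j) = (r_sum(j) − mean(r_sum))/σ_sum: for every rollout index j, |A_DVAO(j)| ≤ |A_sum(j)|, with equality (for all j with A_sum(j) ≠ 0) iff Cov(r_k, r_l) = σ_k σ_l for all k ≠ l with positive weights. -/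
open Finset

noncomputable def gMean (G : ℕ) (r : Fin G → ℝ) : ℝ := (∑ j, r j) / G
noncomputable def gVar (G : ℕ) (r : Fin G → ℝ) : ℝ := (∑ j, (r j - gMean G r)^2) / G
noncomputable def gStd (G : ℕ) (r : Fin G → ℝ) : ℝ := Real.sqrt (gVar G r)
noncomputable def gCov (G : ℕ) (u v : Fin G → ℝ) : ℝ :=
  (∑ j, (u j - gMean G u) * (v j - gMean G v)) / G
noncomputable def stdAdv (G : ℕ) (r : Fin G → ℝ) (j : Fin G) : ℝ :=
  (r j - gMean G r) / gStd G r

lemma gVar_nonneg (G : ℕ) (r : Fin G → ℝ) : 0 ≤ gVar G r :=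
  div_nonneg (Finset.sum_nonneg fun _ _ => sq_nonneg _) (Nat.cast_nonneg _)

lemma gStd_sq (G : ℕ) (r : Fin G → ℝ) : gStd G r ^ 2 = gVar G r :=
  Real.sq_sqrt (gVar_nonneg G r)

lemma gVar_eq_cov (G : ℕ) (r : Fin G → ℝ) : gVar G r = gCov G r r := by
  simp [gVar, gCov, sq]

lemma gCov_le (G : ℕ) (u v : Fin G → ℝ) : gCov G u v ≤ gStd G u * gStd G v := by
  have hcs := Finset.sum_mul_sq_le_sq_mul_sq Finset.univ
      (fun j => u j - gMean G u) (fun j => v j - gMean G v)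
  have hsq : gCov G u v ^ 2 ≤ (gStd G u * gStd G v) ^ 2 := by
    rw [mul_pow, gStd_sq, gStd_sq]
    unfold gCov gVar
    rw [div_pow, div_mul_div_comm]
    apply div_le_div_of_nonneg_right hcs ?_ |>.trans
    · rw [sq]
    · positivity
  calc gCov G u v ≤ |gCov G u v| := le_abs_self _
    _ = Real.sqrt (gCov G u v ^ 2) := (Real.sqrt_sq_eq_abs _).symm
    _ ≤ Real.sqrt ((gStd G u * gStd G v) ^ 2) := Real.sqrt_le_sqrt hsq
    _ = |gStd G u * gStd G v| := Real.sqrt_sq_eq_abs _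
    _ = gStd G u * gStd G v := abs_of_nonneg (mul_nonneg (Real.sqrt_nonneg _) (Real.sqrt_nonneg _))

theorem stmt4 (n G : ℕ) (hG : 0 < G) (r : Fin n → Fin G → ℝ) (w : Fin n → ℝ)
    (hσ : ∀ k, 0 < gStd G (r k))
    (hσsum : 0 < gStd G (fun j => ∑ k, w k * r k j))
    (hw : ∀ k, 0 ≤ w k) (hwsum : ∑ k, w k = 1) :
    (∀ j, |(∑ k, w k * gStd G (r k) * stdAdv G (r k) j) / (∑ l, w l * gStd G (r l))|
        ≤ |stdAdv G (fun j' => ∑ k, w k * r k j') j|) ∧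
    ((∀ j, stdAdv G (fun j' => ∑ k, w k * r k j') j ≠ 0 →
        |(∑ k, w k * gStd G (r k) * stdAdv G (r k) j) / (∑ l, w l * gStd G (r l))|
          = |stdAdv G (fun j' => ∑ k, w k * r k j') j|) ↔
      ∀ k l, k ≠ l → 0 < w k → 0 < w l →
        gCov G (r k) (r l) = gStd G (r k) * gStd G (r l)) := by
  set rsum : Fin G → ℝ := fun j' => ∑ k, w k * r k j' with hrsum
  set S : ℝ := ∑ l, w l * gStd G (r l) with hSdef
  set σs : ℝ := gStd G rsum with hσsdef
  have hGne : (G : ℝ) ≠ 0 := Nat.cast_ne_zero.mpr hG.ne'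
  -- S > 0
  have hwpos : ∃ k, 0 < w k := by
    by_contra h
    push_neg at h
    have : ∑ k, w k = 0 := Finset.sum_eq_zero fun k _ => le_antisymm (h k) (hw k)
    rw [hwsum] at this; norm_num at this
  have hS : 0 < S := by
    obtain ⟨k, hk⟩ := hwpos
    refine Finset.sum_pos' (fun l _ => mul_nonneg (hw l) (hσ l).le) ⟨k, Finset.mem_univ k, ?_⟩
    exact mul_pos hk (hσ k)
  -- mean linearity
  have hmean : gMean G rsum = ∑ k, w k * gMean G (r k) := by
    unfold gMean
    rw [Finset.sum_comm, Finset.sum_div]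
    exact Finset.sum_congr rfl fun k _ => by rw [← Finset.mul_sum, mul_div_assoc]
  -- deviation linearity
  have hdev : ∀ j, rsum j - gMean G rsum = ∑ k, w k * (r k j - gMean G (r k)) := by
    intro j
    rw [hmean]
    simp only [hrsum]
    rw [← Finset.sum_sub_distrib]
    exact Finset.sum_congr rfl fun k _ => (mul_sub _ _ _).symm
  -- key: numerator equals σs * A_sum
  have hkey : ∀ j, ∑ k, w k * gStd G (r k) * stdAdv G (r k) j = σs * stdAdv G rsum j := by
    intro j
    unfold stdAdv
    rw [← hσsdef, mul_div_cancel₀ _ hσsum.ne', hdev j]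
    exact Finset.sum_congr rfl fun k _ => by
      rw [mul_assoc, mul_div_cancel₀ _ (hσ k).ne']
  -- variance expansion
  have hvar : gVar G rsum = ∑ k, ∑ l, w k * w l * gCov G (r k) (r l) := by
    unfold gVar
    have : ∀ j, (rsum j - gMean G rsum) ^ 2
        = ∑ k, ∑ l, (w k * (r k j - gMean G (r k))) * (w l * (r l j - gMean G (r l))) := by
      intro j
      rw [hdev j, sq, Finset.sum_mul_sum]
    rw [Finset.sum_congr rfl fun j _ => this j, Finset.sum_comm, Finset.sum_div]
    refine Finset.sum_congr rfl fun k _ => ?_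
    rw [Finset.sum_comm, Finset.sum_div]
    refine Finset.sum_congr rfl fun l _ => ?_
    unfold gCov
    rw [← mul_div_assoc, Finset.mul_sum]
    exact congrArg (· / (G:ℝ)) (Finset.sum_congr rfl fun j _ => by ring)
  have hS2 : S ^ 2 = ∑ k, ∑ l, w k * w l * (gStd G (r k) * gStd G (r l)) := by
    rw [sq, hSdef, Finset.sum_mul_sum]
    exact Finset.sum_congr rfl fun k _ => Finset.sum_congr rfl fun l _ => by ring
  have hterm_le : ∀ k l, w k * w l * gCov G (r k) (r l)
      ≤ w k * w l * (gStd G (r k) * gStd G (r l)) :=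
    fun k l => mul_le_mul_of_nonneg_left (gCov_le G (r k) (r l)) (mul_nonneg (hw k) (hw l))
  have hvarle : gVar G rsum ≤ S ^ 2 := by
    rw [hvar, hS2]
    exact Finset.sum_le_sum fun k _ => Finset.sum_le_sum fun l _ => hterm_le k l
  have hσsvar : σs = Real.sqrt (gVar G rsum) := rfl
  have hle : σs ≤ S := by
    rw [hσsvar]
    calc Real.sqrt (gVar G rsum) ≤ Real.sqrt (S ^ 2) := Real.sqrt_le_sqrt hvarle
      _ = S := Real.sqrt_sq hS.le
  constructor
  · intro j
    rw [hkey j, abs_div, abs_mul, abs_of_nonneg hσsum.le, abs_of_pos hS, div_le_iff₀ hS]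
    calc σs * |stdAdv G rsum j| ≤ S * |stdAdv G rsum j| :=
          mul_le_mul_of_nonneg_right hle (abs_nonneg _)
      _ = |stdAdv G rsum j| * S := mul_comm _ _
  constructor
  · intro heq k l hkl hwk hwl
    have hvpos : 0 < gVar G rsum := Real.sqrt_pos.mp hσsum
    have hj : ∃ j, rsum j - gMean G rsum ≠ 0 := by
      by_contra h
      push_neg at h
      have h0 : gVar G rsum = 0 := by
        unfold gVar
        rw [Finset.sum_eq_zero fun j _ => by rw [h j]; ring]
        simp
      linarith
    obtain ⟨j, hj⟩ := hj
    have hA : stdAdv G rsum j ≠ 0 := div_ne_zero hj hσsum.ne'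
    have hthis := heq j hA
    rw [hkey j, abs_div, abs_mul, abs_of_nonneg hσsum.le, abs_of_pos hS,
      div_eq_iff hS.ne'] at hthis
    have habs : 0 < |stdAdv G rsum j| := abs_pos.mpr hA
    have hσsS : σs = S :=
      mul_right_cancel₀ habs.ne' (by rw [hthis]; ring)
    have hveq : ∑ k', ∑ l', (w k' * w l' * (gStd G (r k') * gStd G (r l'))
        - w k' * w l' * gCov G (r k') (r l')) = 0 := by
      have h1 : gVar G rsum = S ^ 2 := by rw [← gStd_sq G rsum, ← hσsdef, hσsS]
      rw [Finset.sum_congr rfl fun k' _ => Finset.sum_sub_distrib _ _, Finset.sum_sub_distrib,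
        ← hS2, ← hvar, h1]
      ring
    have houter := (Finset.sum_eq_zero_iff_of_nonneg fun k' _ =>
      Finset.sum_nonneg fun l' _ => sub_nonneg.mpr (hterm_le k' l')).mp hveq
    have hinner := (Finset.sum_eq_zero_iff_of_nonneg fun l' _ =>
      sub_nonneg.mpr (hterm_le k l')).mp (houter k (Finset.mem_univ k))
    have hterm := hinner l (Finset.mem_univ l)
    have hwwpos : 0 < w k * w l := mul_pos hwk hwl
    exact (mul_left_cancel₀ hwwpos.ne' (by linarith [hterm] :
      w k * w l * (gStd G (r k) * gStd G (r l)) = w k * w l * gCov G (r k) (r l))).symm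
  · intro hcov j hA
    have hveq : gVar G rsum = S ^ 2 := by
      rw [hvar, hS2]
      refine Finset.sum_congr rfl fun k _ => Finset.sum_congr rfl fun l _ => ?_
      rcases eq_or_ne k l with rfl | hkl
      · rw [← gVar_eq_cov, ← gStd_sq]
        ring
      rcases (hw k).lt_or_eq with hwk | hwk
      · rcases (hw l).lt_or_eq with hwl | hwl
        · rw [hcov k l hkl hwk hwl]
        · rw [← hwl]; ring
      · rw [← hwk]; ring
    have hσsS : σs = S := by
      rw [hσsvar, hveq, Real.sqrt_sq hS.le]
    rw [hkey j, hσsS, mul_comm, mul_div_assoc, div_self hS.ne', mul_one]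
end

section
/- In the DVAO setting with A_DVAO(j) = (∑_l w_l (r_l(j) − μ_l)) / S where S = ∑_l w_l σ_l > 0, the partial derivative satisfies ∂A_DVAO(j)/∂r_k(j) = (w_k/S)(1 − 1/G − A_DVAO(j) A_k(j)/G) = (w̃_k/σ_k)(1 − 1/G − A_DVAO(j) A_k(j)/G), where w̃_k = w_k σ_k / S. -/
open Finset

theorem stmt7 (n G : ℕ) (hG : 0 < G) (r : Fin n → Fin G → ℝ) (w : Fin n → ℝ)
    (hσ : ∀ l, 0 < gStd G (r l))
    (hw : ∀ l, 0 ≤ w l) (hwsum : ∑ l, w l = 1)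
    (hS : 0 < ∑ l, w l * gStd G (r l)) (k : Fin n) (j : Fin G) :
    HasDerivAt
      (fun t =>
        (∑ l, w l * ((Function.update r k (Function.update (r k) j t)) l j
            - gMean G ((Function.update r k (Function.update (r k) j t)) l)))
          / (∑ l, w l * gStd G ((Function.update r k (Function.update (r k) j t)) l)))
      ((w k / (∑ l, w l * gStd G (r l))) *
        (1 - 1 / (G : ℝ)
          - ((∑ l, w l * (r l j - gMean G (r l))) / (∑ l, w l * gStd G (r l)))
              * stdAdv G (r k) j / G))
      (r k j) ∧
    (w k / (∑ l, w l * gStd G (r l))) *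
        (1 - 1 / (G : ℝ)
          - ((∑ l, w l * (r l j - gMean G (r l))) / (∑ l, w l * gStd G (r l)))
              * stdAdv G (r k) j / G)
      = ((w k * gStd G (r k) / (∑ l, w l * gStd G (r l))) / gStd G (r k)) *
        (1 - 1 / (G : ℝ)
          - ((∑ l, w l * (r l j - gMean G (r l))) / (∑ l, w l * gStd G (r l)))
              * stdAdv G (r k) j / G) := by
  have hGne : (G : ℝ) ≠ 0 := Nat.cast_ne_zero.mpr hG.ne'
  have hσk := hσ k
  have hσkne : gStd G (r k) ≠ 0 := hσk.ne'
  have hSne : (∑ l, w l * gStd G (r l)) ≠ 0 := hS.ne'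
  constructor
  swap
  · have h : w k * gStd G (r k) / (∑ l, w l * gStd G (r l)) / gStd G (r k)
        = w k / (∑ l, w l * gStd G (r l)) := by
      field_simp
    rw [h]
  set upd : ℝ → Fin G → ℝ := fun t => Function.update (r k) j t with hupd
  have hupd0 : upd (r k j) = r k := Function.update_eq_self j (r k)
  have hupdj : ∀ t : ℝ, upd t j = t := fun t => Function.update_self j t (r k)
  have hupdn : ∀ (t : ℝ) (i : Fin G), i ≠ j → upd t i = r k i :=
    fun t i hi => Function.update_of_ne hi t (r k)
  -- mean
  have hsum_upd : ∀ t : ℝ, ∑ i, upd t i = t + ∑ i ∈ Finset.univ.erase j, r k i := by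
    intro t
    rw [← Finset.add_sum_erase _ (upd t) (Finset.mem_univ j), hupdj]
    congr 1
    exact Finset.sum_congr rfl fun i hi => hupdn t i (Finset.ne_of_mem_erase hi)
  have hmean_eq : ∀ t : ℝ, gMean G (upd t) = (t + ∑ i ∈ Finset.univ.erase j, r k i) / G := by
    intro t
    show (∑ i, upd t i) / G = _
    rw [hsum_upd]
  have hmean : HasDerivAt (fun t => gMean G (upd t)) (1 / G) (r k j) := by
    have h : HasDerivAt (fun t : ℝ => (t + ∑ i ∈ Finset.univ.erase j, r k i) / G) (1 / G) (r k j) := by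
      simpa using ((hasDerivAt_id (r k j)).add_const (∑ i ∈ Finset.univ.erase j, r k i)).div_const (G : ℝ)
    exact h.congr_of_eventuallyEq (Filter.Eventually.of_forall fun t => hmean_eq t)
  have hmean0 : gMean G (upd (r k j)) = gMean G (r k) := by rw [hupd0]
  have hzero : ∑ i, (r k i - gMean G (r k)) = 0 := by
    have hm : gMean G (r k) = (∑ i, r k i) / G := rfl
    rw [Finset.sum_sub_distrib, Finset.sum_const, hm]
    simp only [Finset.card_univ, Fintype.card_fin, nsmul_eq_mul]
    field_simp
    ring
  -- variance
  have hvar : HasDerivAt (fun t => gVar G (upd t)) (2 * (r k j - gMean G (r k)) / G) (r k j) := by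
    have h1 : ∀ i : Fin G, HasDerivAt
        (fun t => (upd t i - gMean G (upd t)) ^ 2)
        (2 * (r k i - gMean G (r k)) * ((if i = j then 1 else 0) - 1 / G)) (r k j) := by
      intro i
      by_cases hi : i = j
      · rw [hi]
        have h := ((hasDerivAt_id (r k j)).fun_sub hmean).fun_pow 2
        have hfn : (fun t : ℝ => (upd t j - gMean G (upd t)) ^ 2)
            = (fun t : ℝ => (t - gMean G (upd t)) ^ 2) := by
          funext t; rw [hupdj]
        rw [hfn]
        convert h using 1
        · rfl
        · rfl
        · rfl
        rw [hmean0]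
        norm_num
      · have h := ((hasDerivAt_const (r k j) (r k i)).fun_sub hmean).fun_pow 2
        have hfn : (fun t : ℝ => (upd t i - gMean G (upd t)) ^ 2)
            = (fun t : ℝ => (r k i - gMean G (upd t)) ^ 2) := by
          funext t; rw [hupdn t i hi]
        rw [hfn]
        convert h using 1
        · rfl
        · rfl
        rw [hmean0]
        simp [hi]
    have h2 : HasDerivAt (fun t => ∑ i, (upd t i - gMean G (upd t)) ^ 2)
        (∑ i, 2 * (r k i - gMean G (r k)) * ((if i = j then 1 else 0) - 1 / G)) (r k j) :=
      HasDerivAt.fun_sum fun i _ => h1 i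
    have h3 := h2.div_const (G : ℝ)
    have hsum : ∑ i, 2 * (r k i - gMean G (r k)) * ((if i = j then (1:ℝ) else 0) - 1 / G)
        = 2 * (r k j - gMean G (r k)) := by
      have he : ∀ i : Fin G, 2 * (r k i - gMean G (r k)) * ((if i = j then (1:ℝ) else 0) - 1 / G)
          = (if i = j then 2 * (r k i - gMean G (r k)) else 0) - (2 / G) * (r k i - gMean G (r k)) := by
        intro i; by_cases hi : i = j <;> simp [hi] <;> ring
      rw [Finset.sum_congr rfl fun i _ => he i, Finset.sum_sub_distrib,
        Finset.sum_ite_eq' Finset.univ j, ← Finset.mul_sum, hzero]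
      simp
    rw [hsum] at h3
    exact h3.congr_of_eventuallyEq (Filter.Eventually.of_forall fun t => rfl)
  -- std
  have hvpos : 0 < gVar G (r k) := Real.sqrt_pos.mp hσk
  have hstd : HasDerivAt (fun t => gStd G (upd t))
      ((r k j - gMean G (r k)) / (gStd G (r k) * G)) (r k j) := by
    have hv0 : gVar G (upd (r k j)) = gVar G (r k) := by rw [hupd0]
    have hsq : HasDerivAt Real.sqrt (1 / (2 * Real.sqrt (gVar G (upd (r k j)))))
        (gVar G (upd (r k j))) := by
      rw [hv0]; exact Real.hasDerivAt_sqrt hvpos.ne'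
    have h := hsq.comp (r k j) hvar
    have hsne : Real.sqrt (gVar G (r k)) ≠ 0 := (Real.sqrt_pos.mpr hvpos).ne'
    have heq : 1 / (2 * Real.sqrt (gVar G (upd (r k j)))) * (2 * (r k j - gMean G (r k)) / G)
        = (r k j - gMean G (r k)) / (gStd G (r k) * G) := by
      rw [hv0]
      show _ = (r k j - gMean G (r k)) / (Real.sqrt (gVar G (r k)) * G)
      field_simp
    rw [heq] at h
    exact h.congr_of_eventuallyEq (Filter.Eventually.of_forall fun t => rfl)
  -- numerator and denominator split
  set Cn : ℝ := ∑ l ∈ Finset.univ.erase k, w l * (r l j - gMean G (r l)) with hCn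
  set Cd : ℝ := ∑ l ∈ Finset.univ.erase k, w l * gStd G (r l) with hCd
  have hnum_eq : ∀ t : ℝ,
      (∑ l, w l * ((Function.update r k (upd t)) l j - gMean G ((Function.update r k (upd t)) l)))
        = w k * (t - gMean G (upd t)) + Cn := by
    intro t
    rw [← Finset.add_sum_erase _
      (fun l => w l * ((Function.update r k (upd t)) l j - gMean G ((Function.update r k (upd t)) l)))
      (Finset.mem_univ k)]
    congr 1
    · rw [Function.update_self, hupdj]
    · exact Finset.sum_congr rfl fun l hl => by
        rw [Function.update_of_ne (Finset.ne_of_mem_erase hl)]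
  have hden_eq : ∀ t : ℝ,
      (∑ l, w l * gStd G ((Function.update r k (upd t)) l))
        = w k * gStd G (upd t) + Cd := by
    intro t
    rw [← Finset.add_sum_erase _
      (fun l => w l * gStd G ((Function.update r k (upd t)) l)) (Finset.mem_univ k)]
    congr 1
    · rw [Function.update_self]
    · exact Finset.sum_congr rfl fun l hl => by
        rw [Function.update_of_ne (Finset.ne_of_mem_erase hl)]
  have hden0 : w k * gStd G (upd (r k j)) + Cd = ∑ l, w l * gStd G (r l) := by
    rw [hupd0, hCd]
    exact Finset.add_sum_erase _ (fun l => w l * gStd G (r l)) (Finset.mem_univ k)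
  have hnum0 : w k * (r k j - gMean G (upd (r k j))) + Cn
      = ∑ l, w l * (r l j - gMean G (r l)) := by
    rw [hmean0, hCn]
    exact Finset.add_sum_erase _ (fun l => w l * (r l j - gMean G (r l))) (Finset.mem_univ k)
  have hN : HasDerivAt (fun t => w k * (t - gMean G (upd t)) + Cn)
      (w k * (1 - 1 / G)) (r k j) := by
    have := (((hasDerivAt_id (r k j)).sub hmean).const_mul (w k)).add_const Cn
    simpa using this
  have hD : HasDerivAt (fun t => w k * gStd G (upd t) + Cd)
      (w k * ((r k j - gMean G (r k)) / (gStd G (r k) * G))) (r k j) :=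
    (hstd.const_mul (w k)).add_const Cd
  have hDne : w k * gStd G (upd (r k j)) + Cd ≠ 0 := by rw [hden0]; exact hSne
  have hdiv := hN.div hD hDne
  rw [hden0, hnum0] at hdiv
  have hfinal : (w k * (1 - 1 / G) * (∑ l, w l * gStd G (r l))
        - (∑ l, w l * (r l j - gMean G (r l))) * (w k * ((r k j - gMean G (r k)) / (gStd G (r k) * G))))
        / (∑ l, w l * gStd G (r l)) ^ 2
      = (w k / (∑ l, w l * gStd G (r l))) *
        (1 - 1 / (G : ℝ)
          - ((∑ l, w l * (r l j - gMean G (r l))) / (∑ l, w l * gStd G (r l)))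
              * stdAdv G (r k) j / G) := by
    rw [stdAdv]
    field_simp
  rw [hfinal] at hdiv
  exact hdiv.congr_of_eventuallyEq (Filter.Eventually.of_forall fun t => by
    show (∑ l, w l * ((Function.update r k (upd t)) l j - gMean G ((Function.update r k (upd t)) l)))
          / (∑ l, w l * gStd G ((Function.update r k (upd t)) l)) = _
    rw [hnum_eq t, hden_eq t]; rfl)
end

section
/- For the self-normalized advantage A(j) = (r(j) − μ)/σ of a non-constant r ∈ R^G, the sensitivity ∂A(j)/∂r(j) = (1/σ)(1 − 1/G − A(j)^2/G) is nonnegative if and only if A(j)^2 ≤ G − 1; in particular it is always nonnegative, since max_j A(j)^2 ≤ G − 1 holds for every standardized vector. -/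
open Finset

theorem stmt14 (G : ℕ) (hG : 0 < G) (r : Fin G → ℝ) (hσ : 0 < gStd G r) (j : Fin G) :
    ((0 ≤ (1 / gStd G r) * (1 - 1 / (G : ℝ) - (stdAdv G r j) ^ 2 / G)) ↔
      (stdAdv G r j) ^ 2 ≤ (G : ℝ) - 1) ∧
    (0 ≤ (1 / gStd G r) * (1 - 1 / (G : ℝ) - (stdAdv G r j) ^ 2 / G)) := by
  have hGR : (0:ℝ) < G := by exact_mod_cast hG
  set σ := gStd G r with hσdef
  set A := stdAdv G r with hAdef
  have hσ2 : σ ^ 2 = gVar G r := by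
    rw [hσdef, gStd, sq, Real.mul_self_sqrt]
    have : (0:ℝ) ≤ ∑ j, (r j - gMean G r)^2 := by positivity
    exact div_nonneg this hGR.le
  -- sum of A = 0
  have hsum0 : ∑ j', A j' = 0 := by
    have : ∑ j', (r j' - gMean G r) = 0 := by
      rw [Finset.sum_sub_distrib, Finset.sum_const, Finset.card_univ, Fintype.card_fin,
        gMean, nsmul_eq_mul]
      field_simp
      ring
    simp only [hAdef, stdAdv, div_eq_mul_inv, ← Finset.sum_mul, this, zero_mul]
  -- sum of A^2 = G
  have hsum2 : ∑ j', (A j') ^ 2 = G := by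
    have hv : gVar G r = (∑ j', (r j' - gMean G r)^2) / G := rfl
    have hS : ∑ j', (r j' - gMean G r)^2 = σ ^ 2 * G := by
      rw [hσ2, hv]; field_simp
    have : ∑ j', (A j') ^ 2 = (∑ j', (r j' - gMean G r)^2) / σ ^ 2 := by
      simp only [hAdef, stdAdv, div_pow, Finset.sum_div]
      rw [← hσdef]
    rw [this, hS]
    field_simp
  -- Cauchy-Schwarz on the complement of j
  have hkey : (A j) ^ 2 ≤ (G:ℝ) - 1 := by
    have hcs := sq_sum_le_card_mul_sum_sq
      (s := (Finset.univ.erase j)) (f := A)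
    have hcard : ((Finset.univ.erase j).card : ℝ) = (G:ℝ) - 1 := by
      rw [Finset.card_erase_of_mem (Finset.mem_univ j), Finset.card_univ, Fintype.card_fin]
      push_cast [Nat.cast_sub hG]
      ring
    have hse : ∑ j' ∈ Finset.univ.erase j, A j' = - A j := by
      have := Finset.add_sum_erase Finset.univ A (Finset.mem_univ j)
      linarith [hsum0, this]
    have hse2 : ∑ j' ∈ Finset.univ.erase j, (A j') ^ 2 = (G:ℝ) - (A j)^2 := by
      have := Finset.add_sum_erase Finset.univ (fun x => (A x)^2) (Finset.mem_univ j)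
      linarith [hsum2]
    rw [hse, hse2, hcard, neg_sq] at hcs
    nlinarith [sq_nonneg (A j)]
  have hiff : (0 ≤ (1 / σ) * (1 - 1 / (G : ℝ) - (A j) ^ 2 / G)) ↔
      (A j) ^ 2 ≤ (G : ℝ) - 1 := by
    have hpos : (0:ℝ) < 1/σ := by positivity
    constructor
    · intro h
      have h2 : 0 ≤ 1 - 1/(G:ℝ) - A j ^ 2 / G := nonneg_of_mul_nonneg_right h hpos
      have h3 : 0 ≤ (1 - 1/(G:ℝ) - A j ^ 2 / G) * G := mul_nonneg h2 hGR.le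
      have : (1 - 1/(G:ℝ) - A j ^ 2 / G) * G = G - 1 - A j ^ 2 := by field_simp
      linarith [this ▸ h3]
    · intro h
      apply mul_nonneg hpos.le
      have h2 : A j ^ 2 / G ≤ ((G:ℝ) - 1)/G := by gcongr
      have h3 : ((G:ℝ) - 1)/G = 1 - 1/G := by field_simp
      linarith
  exact ⟨hiff, hiff.mpr hkey⟩
end

section
/- For centered reward deviations d_k(j) = r_k(j) − μ_k with σ_k > 0 and convex weights w_k, the identity ∑_k w_k d_k(j) = σ_sum A_sum(j) = S · A_DVAO(j) holds for every j, where S = ∑_k w_k σ_k, so A_DVAO(j) = (σ_sum / S) A_sum(j); i.e., DVAO is a uniform rescaling of the reward-combination advantage by the factor σ_sum/S ∈ (0, 1]. -/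
open Finset

lemma gMean_sum (n G : ℕ) (r : Fin n → Fin G → ℝ) (w : Fin n → ℝ) :
    gMean G (fun j => ∑ k, w k * r k j) = ∑ k, w k * gMean G (r k) := by
  unfold gMean
  rw [Finset.sum_comm, Finset.sum_div]
  congr 1; ext k
  rw [← Finset.mul_sum, mul_div_assoc]

lemma gStd_eq_norm (G : ℕ) (r : Fin G → ℝ) :
    gStd G r = Real.sqrt (∑ j, (r j - gMean G r)^2) / Real.sqrt G := by
  unfold gStd gVar
  rw [Real.sqrt_div' _ (by positivity)]

theorem stmt16 (n G : ℕ) (hG : 0 < G) (r : Fin n → Fin G → ℝ) (w : Fin n → ℝ)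
    (hσ : ∀ k, 0 < gStd G (r k))
    (hσsum : 0 < gStd G (fun j => ∑ k, w k * r k j))
    (hw : ∀ k, 0 ≤ w k) (hwsum : ∑ k, w k = 1) :
    (∀ j, ∑ k, w k * (r k j - gMean G (r k))
        = gStd G (fun j' => ∑ k, w k * r k j')
          * stdAdv G (fun j' => ∑ k, w k * r k j') j) ∧
    (∀ j, ∑ k, w k * (r k j - gMean G (r k))
        = (∑ k, w k * gStd G (r k))
          * ((∑ k, w k * gStd G (r k) * stdAdv G (r k) j) / (∑ k, w k * gStd G (r k)))) ∧
    (∀ j, (∑ k, w k * gStd G (r k) * stdAdv G (r k) j) / (∑ k, w k * gStd G (r k))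
        = (gStd G (fun j' => ∑ k, w k * r k j') / (∑ k, w k * gStd G (r k)))
          * stdAdv G (fun j' => ∑ k, w k * r k j') j) ∧
    (0 < gStd G (fun j' => ∑ k, w k * r k j') / (∑ k, w k * gStd G (r k))) ∧
    (gStd G (fun j' => ∑ k, w k * r k j') / (∑ k, w k * gStd G (r k)) ≤ 1) := by
  set σ := gStd G (fun j' => ∑ k, w k * r k j') with hσdef
  set S := ∑ k, w k * gStd G (r k) with hSdef
  have hSpos : 0 < S := by
    have hk : ∃ k, 0 < w k := by
      by_contra h
      push_neg at h
      have : ∑ k, w k = 0 := Finset.sum_eq_zero fun k _ =>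
        le_antisymm (h k) (hw k)
      rw [hwsum] at this; norm_num at this
    obtain ⟨k, hk⟩ := hk
    exact Finset.sum_pos' (fun i _ => mul_nonneg (hw i) (hσ i).le)
      ⟨k, Finset.mem_univ k, mul_pos hk (hσ k)⟩
  -- key identity: centered combination
  have key : ∀ j, ∑ k, w k * (r k j - gMean G (r k))
      = (∑ k, w k * r k j) - gMean G (fun j' => ∑ k, w k * r k j') := by
    intro j
    rw [gMean_sum]
    rw [← Finset.sum_sub_distrib]
    congr 1; ext k; ring
  have h1 : ∀ j, ∑ k, w k * (r k j - gMean G (r k))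
      = σ * stdAdv G (fun j' => ∑ k, w k * r k j') j := by
    intro j
    rw [key, stdAdv, ← hσdef, mul_div_cancel₀ _ hσsum.ne']
  -- DVAO numerator equals centered combination
  have hX : ∀ j, (∑ k, w k * gStd G (r k) * stdAdv G (r k) j)
      = ∑ k, w k * (r k j - gMean G (r k)) := by
    intro j
    congr 1; ext k
    rw [stdAdv, mul_assoc, mul_div_cancel₀ _ (hσ k).ne']
  have h2 : ∀ j, ∑ k, w k * (r k j - gMean G (r k))
      = S * ((∑ k, w k * gStd G (r k) * stdAdv G (r k) j) / S) := by
    intro j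
    rw [hX, mul_div_cancel₀ _ hSpos.ne']
  have h3 : ∀ j, (∑ k, w k * gStd G (r k) * stdAdv G (r k) j) / S
      = (σ / S) * stdAdv G (fun j' => ∑ k, w k * r k j') j := by
    intro j
    rw [hX, h1]; ring
  -- the Minkowski inequality: σ ≤ S
  have hσleS : σ ≤ S := by
    let f : Fin n → EuclideanSpace ℝ (Fin G) :=
      fun k => WithLp.toLp 2 (fun j => w k * (r k j - gMean G (r k)))
    have hnorm : ∀ (u : EuclideanSpace ℝ (Fin G)),
        ‖u‖ = Real.sqrt (∑ j, (u j)^2) := by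
      intro u
      rw [EuclideanSpace.norm_eq]
      congr 1; apply Finset.sum_congr rfl
      intro j _
      rw [Real.norm_eq_abs, sq_abs]
    have hfk : ∀ k, ‖f k‖ = w k * Real.sqrt (∑ j, (r k j - gMean G (r k))^2) := by
      intro k
      rw [hnorm]
      rw [← Real.sqrt_sq (hw k), ← Real.sqrt_mul (sq_nonneg _), Finset.mul_sum]
      congr 1; apply Finset.sum_congr rfl
      intro j _; simp only [f, WithLp.ofLp_toLp]; ring
    have hsum : ‖∑ k, f k‖
        = Real.sqrt (∑ j, ((∑ k, w k * r k j) - gMean G (fun j' => ∑ k, w k * r k j'))^2) := by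
      have : (∑ k, f k) = (WithLp.toLp 2 (fun j => (∑ k, w k * r k j) - gMean G (fun j' => ∑ k, w k * r k j')) : EuclideanSpace ℝ (Fin G)) := by
        ext j
        have : (∑ k, f k) j = ∑ k, f k j :=
          by rw [WithLp.ofLp_sum]; exact Finset.sum_apply j Finset.univ fun k => (f k).ofLp
        rw [this]
        simp only [f, WithLp.ofLp_toLp]
        rw [← key j]
      simp only [this, hnorm, WithLp.ofLp_toLp]
    have htri : ‖∑ k, f k‖ ≤ ∑ k, ‖f k‖ := norm_sum_le _ _
    rw [hsum] at htri
    simp only [hfk] at htri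
    have hG' : (0:ℝ) < Real.sqrt G := Real.sqrt_pos.mpr (by exact_mod_cast hG)
    rw [hσdef, hSdef]
    rw [gStd_eq_norm]
    rw [div_le_iff₀ hG']
    calc Real.sqrt (∑ j, ((fun j' => ∑ k, w k * r k j') j - gMean G (fun j' => ∑ k, w k * r k j'))^2)
        ≤ ∑ k, w k * Real.sqrt (∑ j, (r k j - gMean G (r k))^2) := htri
      _ = ∑ k, w k * (gStd G (r k) * Real.sqrt G) := by
          apply Finset.sum_congr rfl
          intro k _
          rw [gStd_eq_norm, div_mul_cancel₀ _ hG'.ne']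
      _ = (∑ k, w k * gStd G (r k)) * Real.sqrt G := by
          rw [Finset.sum_mul]; apply Finset.sum_congr rfl; intro k _; ring
  refine ⟨h1, h2, h3, div_pos hσsum hSpos, ?_⟩
  rw [div_le_one hSpos]; exact hσleS
end
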